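/- The family of metrics g(t) = (1/(3 t^{1/3})) (dx + (1/2) y dz - (1/2) z dy)^2 + t^{1/3} (dy^2 + dz^2) on R^3, defined for t > 0, satisfies the Ricci flow equation ∂g/∂t = -2 Ric(g(t)). -/

import Mathlib

/- STATEMENT 1: The family of metrics
g(t) = (1/(3 t^{1/3})) (dx + (1/2) y dz - (1/2) z dy)² + t^{1/3} (dy² + dz²)
on ℝ³ (t > 0) satisfies the Ricci flow equation ∂g/∂t = -2 Ric(g(t)).
Coordinates: x = p 0, y = p 1, z = p 2.  This is the Nil-type expanding soliton. -/

noncomputable section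

/-- Partial derivative in the `i`-th coordinate direction. -/
def pd {n : ℕ} (i : Fin n) (h : (Fin n → ℝ) → ℝ) (x : Fin n → ℝ) : ℝ :=
  fderiv ℝ h x (Pi.single i 1)

/-- Christoffel symbols Γ^k_{ij} of a metric `g` given in coordinates. -/
def christoffel {n : ℕ} (g : (Fin n → ℝ) → Matrix (Fin n) (Fin n) ℝ)
    (x : Fin n → ℝ) (k i j : Fin n) : ℝ :=
  (1 / 2) * ∑ l, (g x)⁻¹ k l *
    (pd i (fun y => g y l j) x + pd j (fun y => g y l i) x - pd l (fun y => g y i j) x)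

/-- The Ricci tensor of a metric `g` in coordinates. -/
def ricci {n : ℕ} (g : (Fin n → ℝ) → Matrix (Fin n) (Fin n) ℝ)
    (x : Fin n → ℝ) (i j : Fin n) : ℝ :=
  (∑ k, pd k (fun y => christoffel g y k i j) x)
    - (∑ k, pd i (fun y => christoffel g y k k j) x)
    + (∑ k, ∑ l, christoffel g x k k l * christoffel g x l i j)
    - (∑ k, ∑ l, christoffel g x k i l * christoffel g x l k j)

/-- The Heisenberg connection 1-form `ω = dx + (1/2) y dz - (1/2) z dy`
written in components. -/
def nilForm (p : Fin 3 → ℝ) : Fin 3 → ℝ := ![1, -(p 2) / 2, (p 1) / 2]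

/-- The Nil-type expanding soliton metric
`(1/(3 t^{1/3})) ω ⊗ ω + t^{1/3} (dy² + dz²)`. -/
def gNilExpander (t : ℝ) (p : Fin 3 → ℝ) : Matrix (Fin 3) (Fin 3) ℝ :=
  Matrix.of fun i j =>
    (1 / (3 * t ^ ((1 : ℝ) / 3))) * nilForm p i * nilForm p j
      + (if i = j ∧ i ≠ 0 then t ^ ((1 : ℝ) / 3) else 0)

/- ------------------------------------------------------------------ -/
/- Auxiliary machinery                                                 -/
/- ------------------------------------------------------------------ -/

/-- General quadratic function of the coordinates `y 1`, `y 2`. -/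
def qf (α β γ δ ε ζ : ℝ) : (Fin 3 → ℝ) → ℝ :=
  fun y => α + β * y 1 + γ * y 2 + δ * (y 1 * y 2) + ε * (y 1 * y 1) + ζ * (y 2 * y 2)

lemma pd_qf (α β γ δ ε ζ : ℝ) (i : Fin 3) (x : Fin 3 → ℝ) :
    pd i (qf α β γ δ ε ζ) x =
      β * (if (1 : Fin 3) = i then 1 else 0) + γ * (if (2 : Fin 3) = i then 1 else 0)
      + δ * (x 1 * (if (2 : Fin 3) = i then 1 else 0) + x 2 * (if (1 : Fin 3) = i then 1 else 0))
      + ε * (2 * x 1 * (if (1 : Fin 3) = i then 1 else 0))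
      + ζ * (2 * x 2 * (if (2 : Fin 3) = i then 1 else 0)) := by
  have h1 : HasFDerivAt (fun y : Fin 3 → ℝ => y 1)
      (ContinuousLinearMap.proj 1 : (Fin 3 → ℝ) →L[ℝ] ℝ) x :=
    (ContinuousLinearMap.proj 1 : (Fin 3 → ℝ) →L[ℝ] ℝ).hasFDerivAt
  have h2 : HasFDerivAt (fun y : Fin 3 → ℝ => y 2)
      (ContinuousLinearMap.proj 2 : (Fin 3 → ℝ) →L[ℝ] ℝ) x :=
    (ContinuousLinearMap.proj 2 : (Fin 3 → ℝ) →L[ℝ] ℝ).hasFDerivAt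
  have H : HasFDerivAt (qf α β γ δ ε ζ)
      ((((((0 : (Fin 3 → ℝ) →L[ℝ] ℝ)
        + β • (ContinuousLinearMap.proj 1 : (Fin 3 → ℝ) →L[ℝ] ℝ))
        + γ • (ContinuousLinearMap.proj 2 : (Fin 3 → ℝ) →L[ℝ] ℝ))
        + δ • (x 1 • (ContinuousLinearMap.proj 2 : (Fin 3 → ℝ) →L[ℝ] ℝ)
             + x 2 • (ContinuousLinearMap.proj 1 : (Fin 3 → ℝ) →L[ℝ] ℝ)))
        + ε • (x 1 • (ContinuousLinearMap.proj 1 : (Fin 3 → ℝ) →L[ℝ] ℝ)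
             + x 1 • (ContinuousLinearMap.proj 1 : (Fin 3 → ℝ) →L[ℝ] ℝ)))
        + ζ • (x 2 • (ContinuousLinearMap.proj 2 : (Fin 3 → ℝ) →L[ℝ] ℝ)
             + x 2 • (ContinuousLinearMap.proj 2 : (Fin 3 → ℝ) →L[ℝ] ℝ))) x := by
    exact (((((hasFDerivAt_const α x).add (h1.const_mul β)).add (h2.const_mul γ)).add
      ((h1.mul h2).const_mul δ)).add ((h1.mul h1).const_mul ε)).add ((h2.mul h2).const_mul ζ)
  unfold pd
  rw [H.fderiv]
  fin_cases i <;> (simp [Pi.single_apply]; try ring)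

def uu (t : ℝ) : ℝ := t ^ ((1 : ℝ) / 3)
def AA (t : ℝ) : ℝ := 1 / (3 * uu t)
def cc (t : ℝ) : ℝ := 1 / (3 * uu t ^ 2)

def GA (t : ℝ) : Fin 3 → Fin 3 → ℝ := ![![AA t, 0, 0], ![0, uu t, 0], ![0, 0, uu t]]
def GB (t : ℝ) : Fin 3 → Fin 3 → ℝ := ![![0, 0, AA t / 2], ![0, 0, 0], ![AA t / 2, 0, 0]]
def GC (t : ℝ) : Fin 3 → Fin 3 → ℝ := ![![0, -AA t / 2, 0], ![-AA t / 2, 0, 0], ![0, 0, 0]]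
def GD (t : ℝ) : Fin 3 → Fin 3 → ℝ := ![![0, 0, 0], ![0, 0, -AA t / 4], ![0, -AA t / 4, 0]]
def GE (t : ℝ) : Fin 3 → Fin 3 → ℝ := ![![0, 0, 0], ![0, 0, 0], ![0, 0, AA t / 4]]
def GF (t : ℝ) : Fin 3 → Fin 3 → ℝ := ![![0, 0, 0], ![0, AA t / 4, 0], ![0, 0, 0]]

lemma gentry (t : ℝ) (l j : Fin 3) :
    (fun y => gNilExpander t y l j)
      = qf (GA t l j) (GB t l j) (GC t l j) (GD t l j) (GE t l j) (GF t l j) := by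
  fin_cases l <;> fin_cases j <;>
    (funext y;
     simp only [gNilExpander, Matrix.of_apply];
     simp [nilForm, qf, GA, GB, GC, GD, GE, GF, AA, uu, Fin.ext_iff,
       Matrix.vecHead, Matrix.vecTail];
     try ring)

def Ginv (t : ℝ) (x : Fin 3 → ℝ) : Matrix (Fin 3) (Fin 3) ℝ :=
  Matrix.of ![![3 * uu t + (x 1 ^ 2 + x 2 ^ 2) / (4 * uu t), x 2 / (2 * uu t), -(x 1) / (2 * uu t)],
    ![x 2 / (2 * uu t), 1 / uu t, 0],
    ![-(x 1) / (2 * uu t), 0, 1 / uu t]]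

lemma ginv {t : ℝ} (ht : 0 < t) (x : Fin 3 → ℝ) :
    (gNilExpander t x)⁻¹ = Ginv t x := by
  have hu : (0 : ℝ) < t ^ ((1 : ℝ) / 3) := Real.rpow_pos_of_pos ht _
  apply Matrix.inv_eq_right_inv
  ext i j
  fin_cases i <;> fin_cases j <;>
    (simp only [gNilExpander, Matrix.mul_apply, Matrix.of_apply];
     simp [Matrix.mul_apply, Fin.sum_univ_three, nilForm, Ginv, uu,
       Matrix.one_apply, Fin.ext_iff];
     field_simp;
     try ring)

def HA (t : ℝ) : Fin 3 → Fin 3 → Fin 3 → ℝ :=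
  ![![![0,0,0],![0,0,0],![0,0,0]],
    ![![0,0,-cc t/2],![0,0,0],![-cc t/2,0,0]],
    ![![0,cc t/2,0],![cc t/2,0,0],![0,0,0]]]
def HB (t : ℝ) : Fin 3 → Fin 3 → Fin 3 → ℝ :=
  ![![![0,-cc t/4,0],![-cc t/4,0,0],![0,0,0]],
    ![![0,0,0],![0,0,0],![0,0,-cc t/2]],
    ![![0,0,0],![0,0,cc t/4],![0,cc t/4,0]]]
def HC (t : ℝ) : Fin 3 → Fin 3 → Fin 3 → ℝ :=
  ![![![0,0,-cc t/4],![0,0,0],![-cc t/4,0,0]],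
    ![![0,0,0],![0,0,cc t/4],![0,cc t/4,0]],
    ![![0,0,0],![0,-cc t/2,0],![0,0,0]]]
def HD (t : ℝ) : Fin 3 → Fin 3 → Fin 3 → ℝ :=
  ![![![0,0,0],![0,cc t/4,0],![0,0,-cc t/4]],
    ![![0,0,0],![0,0,0],![0,0,0]],
    ![![0,0,0],![0,0,0],![0,0,0]]]
def HE (t : ℝ) : Fin 3 → Fin 3 → Fin 3 → ℝ :=
  ![![![0,0,0],![0,0,-cc t/8],![0,-cc t/8,0]],
    ![![0,0,0],![0,0,0],![0,0,0]],
    ![![0,0,0],![0,0,0],![0,0,0]]]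
def HF (t : ℝ) : Fin 3 → Fin 3 → Fin 3 → ℝ :=
  ![![![0,0,0],![0,0,cc t/8],![0,cc t/8,0]],
    ![![0,0,0],![0,0,0],![0,0,0]],
    ![![0,0,0],![0,0,0],![0,0,0]]]

def Gamf (t : ℝ) (k i j : Fin 3) : (Fin 3 → ℝ) → ℝ :=
  qf (HA t k i j) (HB t k i j) (HC t k i j) (HD t k i j) (HE t k i j) (HF t k i j)

set_option maxHeartbeats 0 in
lemma christoffel_eq {t : ℝ} (ht : 0 < t) (x : Fin 3 → ℝ) (k i j : Fin 3) :
    christoffel (gNilExpander t) x k i j = Gamf t k i j x := by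
  have hu : (0 : ℝ) < t ^ ((1 : ℝ) / 3) := Real.rpow_pos_of_pos ht _
  fin_cases k <;> fin_cases i <;> fin_cases j <;>
    simp [christoffel, ginv ht, Fin.sum_univ_three, gentry, pd_qf,
      Gamf, qf, Ginv, GA, GB, GC, GD, GE, GF, HA, HB, HC, HD, HE, HF, AA, cc, uu,
      Fin.ext_iff, Matrix.vecHead, Matrix.vecTail] <;>
    field_simp <;> ring_nf <;> tauto

set_option maxHeartbeats 0 in
lemma ricci_eq {t : ℝ} (ht : 0 < t) (p : Fin 3 → ℝ) (i j : Fin 3) :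
    ricci (gNilExpander t) p i j =
      cc t ^ 2 / 2 * nilForm p i * nilForm p j
        - cc t / 2 * (if i = j ∧ i ≠ 0 then 1 else 0) := by
  have hu : (0 : ℝ) < t ^ ((1 : ℝ) / 3) := Real.rpow_pos_of_pos ht _
  have hfun : ∀ (k i j : Fin 3),
      (fun y => christoffel (gNilExpander t) y k i j) = Gamf t k i j :=
    fun k i j => funext fun y => christoffel_eq ht y k i j
  fin_cases i <;> fin_cases j <;>
    simp only [ricci, Fin.sum_univ_three, hfun, christoffel_eq ht, Gamf, pd_qf] <;>
    simp [qf, HA, HB, HC, HD, HE, HF, cc, uu, nilForm, Fin.ext_iff,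
      Matrix.vecHead, Matrix.vecTail] <;>
    field_simp <;> ring_nf <;> tauto

/-- The Nil-type expanding soliton satisfies the Ricci flow equation
`∂g/∂t = -2 Ric(g(t))` for all `t > 0`. -/
theorem nil_expander_is_ricci_flow :
    ∀ t : ℝ, 0 < t → ∀ (p : Fin 3 → ℝ) (i j : Fin 3),
      HasDerivAt (fun s => gNilExpander s p i j)
        (-2 * ricci (gNilExpander t) p i j) t := by
  intro t ht p i j
  have hu : (0 : ℝ) < t ^ ((1 : ℝ) / 3) := Real.rpow_pos_of_pos ht _
  have hu3 : (t ^ ((1 : ℝ) / 3)) ^ (3 : ℕ) = t := by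
    rw [← Real.rpow_natCast (t ^ ((1 : ℝ) / 3)) 3, ← Real.rpow_mul ht.le]
    norm_num
  have h1 : HasDerivAt (fun s : ℝ => s ^ ((1 : ℝ) / 3)) (t ^ ((1 : ℝ) / 3) / (3 * t)) t := by
    have h := Real.hasDerivAt_rpow_const (x := t) (p := (1 : ℝ) / 3) (Or.inl ht.ne')
    convert h using 1
    rw [Real.rpow_sub ht, Real.rpow_one]
    ring
  have h3 : HasDerivAt (fun s : ℝ => 3 * s ^ ((1 : ℝ) / 3))
      (3 * (t ^ ((1 : ℝ) / 3) / (3 * t))) t := h1.const_mul 3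
  have hne : 3 * t ^ ((1 : ℝ) / 3) ≠ 0 := by positivity
  have hinv : HasDerivAt (fun s : ℝ => (3 * s ^ ((1 : ℝ) / 3))⁻¹)
      (-(3 * (t ^ ((1 : ℝ) / 3) / (3 * t))) / (3 * t ^ ((1 : ℝ) / 3)) ^ 2) t := h3.inv hne
  have hfull : HasDerivAt (fun s => gNilExpander s p i j)
      (-(3 * (t ^ ((1 : ℝ) / 3) / (3 * t))) / (3 * t ^ ((1 : ℝ) / 3)) ^ 2
          * nilForm p i * nilForm p j
        + (if i = j ∧ i ≠ 0 then t ^ ((1 : ℝ) / 3) / (3 * t) else 0)) t := by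
    have hone : ∀ s : ℝ, 1 / (3 * s ^ ((1 : ℝ) / 3)) = (3 * s ^ ((1 : ℝ) / 3))⁻¹ :=
      fun s => one_div _
    by_cases hij : i = j ∧ i ≠ 0
    · simp only [gNilExpander, Matrix.of_apply, if_pos hij, hone]
      exact ((hinv.mul_const _).mul_const _).add h1
    · simp only [gNilExpander, Matrix.of_apply, if_neg hij, hone, add_zero]
      exact (hinv.mul_const _).mul_const _
  convert hfull using 1
  rw [ricci_eq ht]
  simp only [cc, uu]
  set u := t ^ ((1 : ℝ) / 3) with hu_def
  rw [← hu3]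
  by_cases hij : i = j ∧ i ≠ 0
  · rw [if_pos hij, if_pos hij]
    field_simp
    ring
  · rw [if_neg hij, if_neg hij]
    field_simp
    ring

end
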